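/- Let a : ℝ → (0,1] be continuous, V : ℝ → [0,1] continuous with V(x) ≥ h on [ℓ₁, ℓ₂] for some h ∈ (0,1), and suppose ∫_{ℓ₁}^{ℓ₂} dx/a(x) = y with β(1-h)·y > 2B. Let f : ℝ → ℝ be C¹ with ‖f‖_∞ ≤ B, solving a(x)f'(x) + G(f(x)) + βV(x) = λ on ℝ for a continuous G and constants λ ∈ ℝ, β > 0, and let δ > 0 satisfy 2β(1-h) ≤ δ. Then there exists x ∈ [ℓ₁, ℓ₂] with G(f(x)) < λ - β + δ. -/

import Mathlib

open Set MeasureTheory intervalIntegral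

/-- Key step in Lemma 4.5: on a hill `V ≥ h` of scaled length `y` with `β(1-h)y > 2B`, a
solution bounded by `B` must satisfy `G(f(x)) < λ - β + δ` somewhere on `[ℓ₁, ℓ₂]`,
provided `2β(1-h) ≤ δ`. -/
theorem stmt16
    (a V G : ℝ → ℝ) (ha_cont : Continuous a) (ha : ∀ x, 0 < a x ∧ a x ≤ 1)
    (hV_cont : Continuous V) (hV01 : ∀ x, 0 ≤ V x ∧ V x ≤ 1)
    (hGc : Continuous G)
    (β lam h y B δ ℓ₁ ℓ₂ : ℝ) (hβ : 0 < β)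
    (hh0 : 0 < h) (hh1 : h < 1) (hl : ℓ₁ ≤ ℓ₂)
    (hhill : ∀ x ∈ Icc ℓ₁ ℓ₂, h ≤ V x)
    (hy : (∫ x in ℓ₁..ℓ₂, 1 / a x) = y)
    (hby : 2 * B < β * (1 - h) * y)
    (f f' : ℝ → ℝ) (hf : ∀ x, HasDerivAt f (f' x) x) (hf'c : Continuous f')
    (hB : ∀ x, |f x| ≤ B)
    (hsol : ∀ x, a x * f' x + G (f x) + β * V x = lam)
    (hδ : 0 < δ) (hδ2 : 2 * (β * (1 - h)) ≤ δ) :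
    ∃ x ∈ Icc ℓ₁ ℓ₂, G (f x) < lam - β + δ := by
  by_contra hcon
  push_neg at hcon
  have h1h : (0:ℝ) < 1 - h := by linarith
  have hbh : 0 < β * (1 - h) := by positivity
  -- pointwise bound on f'
  have hpt : ∀ x ∈ Icc ℓ₁ ℓ₂, f' x ≤ (-(β * (1 - h))) * (1 / a x) := by
    intro x hx
    have hax := (ha x).1
    have h1 : a x * f' x ≤ β * (1 - h) - δ := by
      have := hsol x
      have hG := hcon x hx
      have hVx := hhill x hx
      nlinarith
    have h2 : β * (1 - h) - δ ≤ -(β * (1 - h)) := by linarith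
    rw [neg_mul, mul_one_div, le_neg, div_le_iff₀ hax]
    nlinarith
  have hcontinv : ContinuousOn (fun x => 1 / a x) (uIcc ℓ₁ ℓ₂) :=
    (continuousOn_const.div ha_cont.continuousOn (fun x _ => (ha x).1.ne'))
  have hint1 : IntervalIntegrable (fun x => 1 / a x) volume ℓ₁ ℓ₂ :=
    hcontinv.intervalIntegrable
  have hint2 : IntervalIntegrable f' volume ℓ₁ ℓ₂ := hf'c.intervalIntegrable _ _
  have hFTC : (∫ x in ℓ₁..ℓ₂, f' x) = f ℓ₂ - f ℓ₁ :=
    integral_eq_sub_of_hasDerivAt (fun x _ => hf x) hint2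
  have hmono : (∫ x in ℓ₁..ℓ₂, f' x) ≤ ∫ x in ℓ₁..ℓ₂, (-(β * (1 - h))) * (1 / a x) := by
    apply integral_mono_on hl hint2 (hint1.const_mul _)
    exact hpt
  rw [intervalIntegral.integral_const_mul, hy] at hmono
  have hfl₁ := abs_le.mp (hB ℓ₁)
  have hfl₂ := abs_le.mp (hB ℓ₂)
  rw [hFTC] at hmono
  nlinarith
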